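/- For any X ∈ F₂^{n×L} and positive integers t ≤ n, s ≤ L, the number of Y ∈ F₂^{n×L} with d_{s-DC}(X,Y) = t is at least C(n,t) · C(L,s)^t. -/

import Mathlib

/-- The fixed-length Levenshtein distance between `x, y ∈ F₂^L`:
`L` minus the length of a longest common subsequence; equivalently the minimum `s`
such that `y` can be obtained from `x` by `s` deletions followed by `s` insertions. -/
noncomputable def dFLL {L : ℕ} (x y : Fin L → ZMod 2) : ℕ :=
  L - sSup {m : ℕ | ∃ w : List (ZMod 2),
    w.length = m ∧ w.Sublist (List.ofFn x) ∧ w.Sublist (List.ofFn y)}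

open Classical in
/-- `d_{s-DC}(X,Y)`: `∞` if some row-pair has fixed-length Levenshtein distance
exceeding `s`, and otherwise the number of rows in which `X` and `Y` differ. -/
noncomputable def dsDC {n L : ℕ} (s : ℕ) (X Y : Fin n → Fin L → ZMod 2) : ℕ∞ :=
  if ∃ i, s < dFLL (X i) (Y i) then ⊤
  else ((Finset.univ.filter fun i => X i ≠ Y i).card : ℕ∞)

lemma dFLL_le_card_ne {L : ℕ} (x y : Fin L → ZMod 2) :
    dFLL x y ≤ (Finset.univ.filter fun j => x j ≠ y j).card := by
  classical
  set D := Finset.univ.filter fun j : Fin L => x j ≠ y j with hD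
  set M := {m : ℕ | ∃ w : List (ZMod 2),
    w.length = m ∧ w.Sublist (List.ofFn x) ∧ w.Sublist (List.ofFn y)} with hM
  have hbdd : BddAbove M := ⟨L, fun m hm => by
    obtain ⟨w, hw, hx, -⟩ := hm
    simpa [hw] using hx.length_le⟩
  set l := (List.finRange L).filter fun j => decide (j ∉ D) with hl
  set w := l.map x with hw
  have hwx : w.Sublist (List.ofFn x) := by
    rw [List.ofFn_eq_map]; exact (List.filter_sublist).map x
  have hxy : ∀ j ∈ l, x j = y j := by
    intro j hj
    have : j ∉ D := by simpa using (List.mem_filter.mp hj).2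
    simpa [hD] using this
  have hwy : w.Sublist (List.ofFn y) := by
    have : w = l.map y := List.map_congr_left hxy
    rw [this, List.ofFn_eq_map]; exact (List.filter_sublist).map y
  have hlen : w.length = L - D.card := by
    rw [hw, List.length_map]
    have h1 : l.length = (Finset.univ.filter fun j : Fin L => j ∉ D).card := rfl
    rw [h1]
    rw [Finset.filter_not, Finset.card_sdiff_of_subset (Finset.filter_subset _ _)]
    simp
  have hmem : (L - D.card) ∈ M := ⟨w, hlen, hwx, hwy⟩
  have hle : L - D.card ≤ sSup M := le_csSup hbdd hmem
  have : dFLL x y = L - sSup M := rfl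
  omega

/-- for any `X ∈ F₂^{n×L}` and `t ≤ n`, `s ≤ L`, the number of `Y` with
`d_{s-DC}(X,Y) = t` is at least `C(n,t) · C(L,s)^t`. -/
theorem stmt_17 (n L t s : ℕ) (ht : 0 < t) (htn : t ≤ n) (hs : 0 < s) (hsL : s ≤ L)
    (X : Fin n → Fin L → ZMod 2) :
    n.choose t * L.choose s ^ t ≤
      Nat.card {Y : Fin n → Fin L → ZMod 2 | dsDC s X Y = (t : ℕ∞)} := by
  classical
  -- the index type
  let A := Σ T : {T : Finset (Fin n) // T.card = t},
      (∀ _ : (T.1 : Finset (Fin n)), {S : Finset (Fin L) // S.card = s})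
  -- the matrix built from a choice
  let mat : A → Fin n → Fin L → ZMod 2 := fun a i j =>
    if h : i ∈ a.1.1 then X i j + (if j ∈ (a.2 ⟨i, h⟩).1 then 1 else 0) else X i j
  have key : ∀ a : A, ∀ i j, mat a i j ≠ X i j ↔ ∃ h : i ∈ a.1.1, j ∈ (a.2 ⟨i, h⟩).1 := by
    intro a i j
    by_cases h : i ∈ a.1.1
    · by_cases hj : j ∈ (a.2 ⟨i, h⟩).1
      · simp only [mat, dif_pos h, if_pos hj]
        constructor
        · intro _; exact ⟨h, hj⟩
        · intro _ habs
          have : (1 : ZMod 2) = 0 := left_eq_add.mp habs.symm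
          simp at this
      · simp [mat, h, hj]
    · simp [mat, h]
  have rowdiff : ∀ a : A, ∀ i, X i ≠ mat a i ↔ i ∈ a.1.1 := by
    intro a i
    constructor
    · intro hne
      by_contra h
      exact hne (funext fun j => by simp [mat, h])
    · intro h hne
      have hcard : (a.2 ⟨i, h⟩).1.card = s := (a.2 ⟨i, h⟩).2
      have : (a.2 ⟨i, h⟩).1.Nonempty := Finset.card_pos.mp (by omega)
      obtain ⟨j, hj⟩ := this
      have := (key a i j).mpr ⟨h, hj⟩
      exact this (congrFun hne.symm j)
  have hmem : ∀ a : A, dsDC s X (mat a) = (t : ℕ∞) := by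
    intro a
    have hno : ¬∃ i, s < dFLL (X i) (mat a i) := by
      rintro ⟨i, hi⟩
      have hle : dFLL (X i) (mat a i) ≤
          (Finset.univ.filter fun j => X i j ≠ mat a i j).card := dFLL_le_card_ne _ _
      by_cases h : i ∈ a.1.1
      · have hsub : (Finset.univ.filter fun j => X i j ≠ mat a i j) ⊆ (a.2 ⟨i, h⟩).1 := by
          intro j hj
          have := (Finset.mem_filter.mp hj).2
          obtain ⟨h', hj'⟩ := (key a i j).mp (Ne.symm this)
          exact hj'
        have := Finset.card_le_card hsub
        have hcard : (a.2 ⟨i, h⟩).1.card = s := (a.2 ⟨i, h⟩).2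
        omega
      · have hz : (Finset.univ.filter fun j => X i j ≠ mat a i j) = ∅ := by
          ext j; simp [mat, h]
        rw [hz] at hle
        simp at hle
        omega
    rw [dsDC, if_neg hno]
    have : (Finset.univ.filter fun i => X i ≠ mat a i) = a.1.1 := by
      ext i; simp [rowdiff a i]
    rw [this, a.1.2]
  have hinj : Function.Injective
      (fun a : A => (⟨mat a, hmem a⟩ :
        {Y : Fin n → Fin L → ZMod 2 | dsDC s X Y = (t : ℕ∞)})) := by
    rintro ⟨T, f⟩ ⟨T', f'⟩ heq
    have hY : mat ⟨T, f⟩ = mat ⟨T', f'⟩ := congrArg Subtype.val heq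
    have hT : T = T' := by
      apply Subtype.ext
      ext i
      rw [← rowdiff ⟨T, f⟩ i, ← rowdiff ⟨T', f'⟩ i, hY]
    subst hT
    have hf : f = f' := by
      funext i
      apply Subtype.ext
      ext j
      rw [show (j ∈ (f i).1) = (j ∈ ((⟨T, f⟩ : A).2 ⟨i.1, i.2⟩).1) from rfl]
      rw [show (j ∈ (f' i).1) = (j ∈ ((⟨T, f'⟩ : A).2 ⟨i.1, i.2⟩).1) from rfl]
      constructor
      · intro hj
        obtain ⟨h', hj'⟩ := (key ⟨T, f'⟩ i.1 j).mp (by rw [← hY]; exact (key ⟨T, f⟩ i.1 j).mpr ⟨i.2, hj⟩)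
        exact hj'
      · intro hj
        obtain ⟨h', hj'⟩ := (key ⟨T, f⟩ i.1 j).mp (by rw [hY]; exact (key ⟨T, f'⟩ i.1 j).mpr ⟨i.2, hj⟩)
        exact hj'
    rw [hf]
  have hcardA : Nat.card A = n.choose t * L.choose s ^ t := by
    rw [Nat.card_eq_fintype_card, Fintype.card_sigma]
    have : ∀ T : {T : Finset (Fin n) // T.card = t},
        Fintype.card (∀ _ : (T.1 : Finset (Fin n)), {S : Finset (Fin L) // S.card = s})
          = L.choose s ^ t := by
      intro T
      rw [Fintype.card_fun, Fintype.card_finset_len, Fintype.card_fin, Fintype.card_coe, T.2]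
    rw [Finset.sum_congr rfl fun T _ => this T, Finset.sum_const, Finset.card_univ,
      Fintype.card_finset_len, Fintype.card_fin, smul_eq_mul]
  calc n.choose t * L.choose s ^ t = Nat.card A := hcardA.symm
    _ ≤ _ := Nat.card_le_card_of_injective _ hinj
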